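/- Let w_1, …, w_r ∈ ℤ^{r+2} be vectors of the form w_s = −e_s + e_{s−1} + Σ_{i∈A_s} e_i with A_s ⊆ {−1, 0, 1, …, s−2}, such that each w_s satisfies w_s·e_{−1} = w_s·e_0. Then there exist integers σ'_1, …, σ'_r with σ'_i ≥ 1 for all i, satisfying the change-maker condition, such that the ℤ-span of {w_1, …, w_r} equals {v ∈ ℤ^{r+2} : v·σ' = v·ρ = 0}, where σ' = e_0 + σ'_1 e_1 + ⋯ + σ'_r e_r and ρ = e_{−1} − e_0. In particular, the span of {w_1, …, w_r} is an indecomposable change-maker lattice. -/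

import Mathlib

open Finset

/-- The standard basis vector `e j` of `ℤ^{r+2}`, realised as a function
`ℤ → ℤ` (only indices `-1, 0, 1, …, r` are used). -/
def stdE (j : ℤ) : ℤ → ℤ := fun i => if i = j then 1 else 0

/-- The vector `σ = e₀ + σ₁e₁ + ⋯ + σᵣeᵣ`. -/
def sigmaVec (r : ℤ) (σ : ℤ → ℤ) : ℤ → ℤ :=
  fun i => if i = 0 then 1 else if 1 ≤ i ∧ i ≤ r then σ i else 0

/-- The vector `ρ = e₋₁ − e₀`. -/
def rhoVec : ℤ → ℤ := fun i => stdE (-1) i - stdE 0 i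

/-- The standard inner product on `ℤ^{r+2}` (coordinates `-1, 0, 1, …, r`). -/
noncomputable def ip (r : ℤ) (x y : ℤ → ℤ) : ℤ := ∑ i ∈ Finset.Icc (-1) r, x i * y i

/-- The change-maker condition on `σ₁, …, σᵣ`:
`0 ≤ σ₁ ≤ 1` and `σ_{i−1} ≤ σ_i ≤ σ₁ + ⋯ + σ_{i−1} + 1` for `1 < i ≤ r`. -/
def ChangeMaker (r : ℤ) (σ : ℤ → ℤ) : Prop :=
  0 ≤ σ 1 ∧ σ 1 ≤ 1 ∧ ∀ i, 1 < i → i ≤ r →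
    σ (i - 1) ≤ σ i ∧ σ i ≤ (∑ j ∈ Finset.Icc 1 (i - 1), σ j) + 1

/-- Membership in the change-maker lattice
`L = {v ∈ ℤ^{r+2} : v·σ = v·ρ = 0}`. -/
def memCM (r : ℤ) (σ : ℤ → ℤ) (x : ℤ → ℤ) : Prop :=
  (∀ i, i ∉ Finset.Icc (-1) r → x i = 0) ∧
    ip r x (sigmaVec r σ) = 0 ∧ ip r x rhoVec = 0

/-- A vector `v ∈ L` is irreducible if there are no nonzero `x, y ∈ L` with
`v = x + y` and `x·y ≥ 0`. -/
def IrredCM (r : ℤ) (σ : ℤ → ℤ) (v : ℤ → ℤ) : Prop :=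
  ¬ ∃ x y : ℤ → ℤ, memCM r σ x ∧ memCM r σ y ∧ x ≠ 0 ∧ y ≠ 0 ∧
    v = x + y ∧ 0 ≤ ip r x y

/-- A subset `S` of `ℤ^{r+2}` is indecomposable if it is not an orthogonal
direct sum of two nonzero subgroups. -/
def IndecompCM (r : ℤ) (S : Set (ℤ → ℤ)) : Prop :=
  ¬ ∃ L1 L2 : AddSubgroup (ℤ → ℤ), (L1 : Set (ℤ → ℤ)) ⊆ S ∧
    (L2 : Set (ℤ → ℤ)) ⊆ S ∧ L1 ≠ ⊥ ∧ L2 ≠ ⊥ ∧ L1 ⊓ L2 = ⊥ ∧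
    (∀ x ∈ S, ∃ a ∈ L1, ∃ b ∈ L2, x = a + b) ∧
    (∀ x ∈ L1, ∀ y ∈ L2, ip r x y = 0)

/-! ### Auxiliary lemmas -/

lemma sum_Icc_top (a b : ℤ) (h : a ≤ b + 1) (f : ℤ → ℤ) :
    ∑ i ∈ Finset.Icc a (b+1), f i = (∑ i ∈ Finset.Icc a b, f i) + f (b+1) := by
  have : Finset.Icc a (b+1) = insert (b+1) (Finset.Icc a b) := by
    ext x; simp only [Finset.mem_Icc, Finset.mem_insert]; omega
  rw [this, Finset.sum_insert (by simp), add_comm]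

lemma sum_Icc_range (n : ℕ) (f : ℤ → ℤ) :
    ∑ i ∈ Finset.Icc (0:ℤ) ((n:ℤ)-1), f i = ∑ i ∈ Finset.range n, f (i:ℤ) := by
  induction n with
  | zero => simp
  | succ m ih =>
      have h1 : ((m+1:ℕ):ℤ) - 1 = ((m:ℤ) - 1) + 1 := by push_cast; ring
      rw [h1, sum_Icc_top _ _ (by omega), ih, Finset.sum_range_succ]
      norm_num

/-- The recursively defined change-maker coefficients:
`cmSig w 0 = 1` (playing the role of `σ₀`) and
`cmSig w (n+1) = ∑_{i ≤ n} w_{n+1}(i) · cmSig w i`. -/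
def cmSig (w : ℤ → ℤ → ℤ) : ℕ → ℤ
  | 0 => 1
  | (n+1) => ∑ i ∈ (Finset.range (n+1)).attach, w ((n:ℤ)+1) (i.1:ℤ) * cmSig w i.1
  decreasing_by exact Finset.mem_range.mp i.2

lemma cmSig_zero (w : ℤ → ℤ → ℤ) : cmSig w 0 = 1 := by rw [cmSig]

lemma cmSig_succ (w : ℤ → ℤ → ℤ) (n : ℕ) :
    cmSig w (n+1) = ∑ i ∈ Finset.range (n+1), w ((n:ℤ)+1) (i:ℤ) * cmSig w i := by
  rw [cmSig]
  exact Finset.sum_attach (Finset.range (n+1)) (fun i => w ((n:ℤ)+1) (i:ℤ) * cmSig w i)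

section cmSigFacts

variable (r : ℤ) (w : ℤ → ℤ → ℤ)
variable (hW : ∀ n : ℕ, ((n:ℤ)+1) ≤ r → w ((n:ℤ)+1) (n:ℤ) = 1 ∧
    ∀ i : ℕ, i < n → (w ((n:ℤ)+1) (i:ℤ) = 0 ∨ w ((n:ℤ)+1) (i:ℤ) = 1))

include hW

lemma cmSig_pos : ∀ n : ℕ, (n:ℤ) ≤ r → 1 ≤ cmSig w n := by
  intro n
  induction n using Nat.strong_induction_on with
  | _ n ih =>
    match n with
    | 0 => intro _; simp [cmSig_zero]
    | (m+1) =>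
      intro hm
      obtain ⟨h1, h2⟩ := hW m (by exact_mod_cast hm)
      rw [cmSig_succ, Finset.sum_range_succ, h1, one_mul]
      have hsum : 0 ≤ ∑ i ∈ Finset.range m, w ((m:ℤ)+1) (i:ℤ) * cmSig w i := by
        apply Finset.sum_nonneg
        intro i hi
        have hi' := Finset.mem_range.mp hi
        have hc : 1 ≤ cmSig w i := ih i (by omega) (by omega)
        rcases h2 i hi' with h | h <;> rw [h] <;> nlinarith
      have := ih m (by omega) (by omega)
      omega

lemma cmSig_mono (n : ℕ) (hn : ((n:ℤ)+1) ≤ r) : cmSig w n ≤ cmSig w (n+1) := by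
  obtain ⟨h1, h2⟩ := hW n hn
  rw [cmSig_succ, Finset.sum_range_succ, h1, one_mul]
  have hsum : 0 ≤ ∑ i ∈ Finset.range n, w ((n:ℤ)+1) (i:ℤ) * cmSig w i := by
    apply Finset.sum_nonneg
    intro i hi
    have hi' := Finset.mem_range.mp hi
    have hc : 1 ≤ cmSig w i := cmSig_pos r w hW i (by omega)
    rcases h2 i hi' with h | h <;> rw [h] <;> nlinarith
  omega

lemma cmSig_upper (n : ℕ) (hn : ((n:ℤ)+1) ≤ r) :
    cmSig w (n+1) ≤ ∑ i ∈ Finset.range (n+1), cmSig w i := by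
  obtain ⟨h1, h2⟩ := hW n hn
  rw [cmSig_succ]
  apply Finset.sum_le_sum
  intro i hi
  have hi' := Finset.mem_range.mp hi
  have hc : 1 ≤ cmSig w i := cmSig_pos r w hW i (by omega)
  rcases Nat.lt_or_ge i n with h | h
  · rcases h2 i h with h' | h' <;> rw [h'] <;> nlinarith
  · have : i = n := by omega
    subst this; rw [h1]; nlinarith

end cmSigFacts

lemma Icc_split (r : ℤ) (hr : 1 ≤ r) :
    Finset.Icc (-1:ℤ) r = insert (-1) (insert 0 (Finset.Icc 1 r)) := by
  ext i
  simp only [Finset.mem_Icc, Finset.mem_insert]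
  omega

lemma ip_expand (r : ℤ) (hr : 1 ≤ r) (x y : ℤ → ℤ) :
    ip r x y = x (-1) * y (-1) + x 0 * y 0 + ∑ i ∈ Finset.Icc (1:ℤ) r, x i * y i := by
  rw [ip, Icc_split r hr, Finset.sum_insert (by simp), Finset.sum_insert (by simp), add_assoc]

lemma ip_comm (r : ℤ) (x y : ℤ → ℤ) : ip r x y = ip r y x := by
  simp [ip, mul_comm]

lemma ip_rho_eq (r : ℤ) (hr : 1 ≤ r) (x : ℤ → ℤ) : ip r x rhoVec = x (-1) - x 0 := by
  rw [ip_expand r hr]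
  have h0 : ∑ i ∈ Finset.Icc (1:ℤ) r, x i * rhoVec i = 0 := by
    apply Finset.sum_eq_zero
    intro i hi
    have := Finset.mem_Icc.mp hi
    have h1 : rhoVec i = 0 := by
      simp only [rhoVec, stdE]; rw [if_neg (by omega), if_neg (by omega)]; ring
    rw [h1, mul_zero]
  rw [h0]
  simp [rhoVec, stdE]
  ring

lemma ip_sigma_eq (r : ℤ) (hr : 1 ≤ r) (σ x : ℤ → ℤ) :
    ip r x (sigmaVec r σ) = x 0 + ∑ i ∈ Finset.Icc (1:ℤ) r, x i * σ i := by
  rw [ip_expand r hr]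
  have h0 : ∀ i ∈ Finset.Icc (1:ℤ) r, x i * sigmaVec r σ i = x i * σ i := by
    intro i hi
    have := Finset.mem_Icc.mp hi
    simp only [sigmaVec]
    rw [if_neg (by omega), if_pos (by omega)]
  rw [Finset.sum_congr rfl h0]
  simp [sigmaVec]

lemma ip_sum_left (r : ℤ) (c : ℤ → ℤ) (u : ℤ → ℤ → ℤ) (y : ℤ → ℤ) :
    ip r (fun i => ∑ s ∈ Finset.Icc (1:ℤ) r, c s * u s i) y
      = ∑ s ∈ Finset.Icc (1:ℤ) r, c s * ip r (u s) y := by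
  simp only [ip, Finset.sum_mul, Finset.mul_sum, mul_assoc]
  exact Finset.sum_comm

lemma ip_add_smul (r : ℤ) (x y z : ℤ → ℤ) (k : ℤ) :
    ip r (fun i => x i + k * y i) z = ip r x z + k * ip r y z := by
  simp only [ip, add_mul, Finset.sum_add_distrib, Finset.mul_sum, mul_assoc]

lemma span_of_triangular (r : ℤ) (hr : 1 ≤ r) (σ : ℤ → ℤ) (u : ℤ → ℤ → ℤ)
    (hu : ∀ s, 1 ≤ s → s ≤ r → memCM r σ (u s) ∧ u s s = -1 ∧ ∀ i, s < i → u s i = 0) :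
    ∀ x, memCM r σ x → ∃ c : ℤ → ℤ, x = fun i => ∑ s ∈ Finset.Icc (1:ℤ) r, c s * u s i := by
  have key : ∀ n : ℕ, ∀ x, memCM r σ x → (∀ i, (n:ℤ) < i → x i = 0) →
      ∃ c : ℤ → ℤ, x = fun i => ∑ s ∈ Finset.Icc (1:ℤ) r, c s * u s i := by
    intro n
    induction n with
    | zero =>
      intro x hx htop
      have hsum : ∑ i ∈ Finset.Icc (1:ℤ) r, x i * σ i = 0 := by
        apply Finset.sum_eq_zero
        intro i hi
        rw [htop i (by exact_mod_cast (Finset.mem_Icc.mp hi).1.trans_lt' (by norm_num))]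
        ring
      have h0 : x 0 = 0 := by
        have := hx.2.1
        rw [ip_sigma_eq r hr, hsum] at this
        omega
      have hm1 : x (-1) = 0 := by
        have := hx.2.2
        rw [ip_rho_eq r hr] at this
        omega
      have hzero : ∀ i, x i = 0 := by
        intro i
        rcases lt_trichotomy i 0 with h | h | h
        · rcases lt_trichotomy i (-1) with h' | h' | h'
          · exact hx.1 i (by simp only [Finset.mem_Icc]; omega)
          · rw [h']; exact hm1
          · omega
        · rw [h]; exact h0
        · exact htop i (by exact_mod_cast h)
      refine ⟨0, funext fun i => ?_⟩
      simp [hzero i]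
    | succ n ih =>
      intro x hx htop
      by_cases hle : ((n:ℤ)+1) ≤ r
      · set s : ℤ := (n:ℤ)+1 with hs
        have hs1 : 1 ≤ s := by omega
        obtain ⟨hmem, hdiag, htri⟩ := hu s hs1 hle
        set x' : ℤ → ℤ := fun i => x i + x s * u s i with hx'
        have hx'mem : memCM r σ x' := by
          refine ⟨fun i hi => ?_, ?_, ?_⟩
          · simp only [hx']
            rw [hx.1 i hi, hmem.1 i hi]; ring
          · rw [hx', ip_add_smul, hx.2.1, hmem.2.1]; ring
          · rw [hx', ip_add_smul, hx.2.2, hmem.2.2]; ring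
        have hx'top : ∀ i, (n:ℤ) < i → x' i = 0 := by
          intro i hi
          rcases eq_or_lt_of_le (show s ≤ i by omega) with h | h
          · simp only [hx', ← h, hdiag]; ring
          · simp only [hx']
            rw [htop i (by omega), htri i h]; ring
        obtain ⟨c', hc'⟩ := ih x' hx'mem hx'top
        refine ⟨fun t => c' t - (if t = s then x s else 0), funext fun i => ?_⟩
        have hsplit : ∑ t ∈ Finset.Icc (1:ℤ) r, (c' t - (if t = s then x s else 0)) * u t i
            = (∑ t ∈ Finset.Icc (1:ℤ) r, c' t * u t i)
              - ∑ t ∈ Finset.Icc (1:ℤ) r, (if t = s then x s * u t i else 0) := by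
          rw [← Finset.sum_sub_distrib]
          apply Finset.sum_congr rfl
          intro t _
          split_ifs with h
          · subst h; ring
          · ring
        rw [hsplit, Finset.sum_ite_eq' (Finset.Icc (1:ℤ) r) s,
          if_pos (Finset.mem_Icc.mpr ⟨hs1, hle⟩)]
        have := congrFun hc' i
        simp only [hx'] at this
        omega
      · exact ih x hx (fun i hi => by
          by_cases h : i ≤ r
          · exact htop i (by omega)
          · exact hx.1 i (by simp only [Finset.mem_Icc]; omega))
  intro x hx
  exact key r.toNat x hx (fun i hi => hx.1 i (by simp only [Finset.mem_Icc]; omega))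

lemma cm_subset_sum (r : ℤ) (σ : ℤ → ℤ)
    (hub : ∀ i, 1 ≤ i → i ≤ r → σ i ≤ (∑ j ∈ Finset.Icc 1 (i-1), σ j) + 1) :
    ∀ n : ℕ, (n:ℤ) ≤ r → ∀ t : ℤ, 0 ≤ t → t ≤ ∑ j ∈ Finset.Icc (1:ℤ) (n:ℤ), σ j →
      ∃ S ⊆ Finset.Icc (1:ℤ) (n:ℤ), ∑ j ∈ S, σ j = t := by
  intro n
  induction n with
  | zero =>
    intro _ t ht1 ht2
    refine ⟨∅, Finset.empty_subset _, ?_⟩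
    simp only [Nat.cast_zero] at ht2
    rw [show Finset.Icc (1:ℤ) 0 = ∅ from by simp] at ht2
    simp at ht2 ⊢
    omega
  | succ n ih =>
    intro hn t ht1 ht2
    have hcast : ((n+1:ℕ):ℤ) = (n:ℤ) + 1 := by push_cast; ring
    rw [hcast, sum_Icc_top 1 (n:ℤ) (by omega)] at ht2
    by_cases hle : t ≤ ∑ j ∈ Finset.Icc (1:ℤ) (n:ℤ), σ j
    · obtain ⟨S, hS1, hS2⟩ := ih (by omega) t ht1 hle
      refine ⟨S, hS1.trans (Finset.Icc_subset_Icc le_rfl (by omega)), ?_⟩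
      exact hS2
    · have hub' := hub ((n:ℤ)+1) (by omega) (by omega)
      rw [show (n:ℤ)+1-1 = (n:ℤ) from by ring] at hub'
      obtain ⟨S, hS1, hS2⟩ := ih (by omega) (t - σ ((n:ℤ)+1)) (by omega) (by omega)
      have hnot : ((n:ℤ)+1) ∉ S := fun h => by
        have := Finset.mem_Icc.mp (hS1 h); omega
      refine ⟨insert ((n:ℤ)+1) S, ?_, ?_⟩
      · intro x hx
        rcases Finset.mem_insert.mp hx with h | h
        · subst h; simp only [Finset.mem_Icc]; constructor <;> omega
        · have := Finset.mem_Icc.mp (hS1 h)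
          simp only [Finset.mem_Icc]; constructor <;> omega
      · rw [Finset.sum_insert hnot, hS2]; ring

theorem stmt10 (r : ℤ) (hr : 1 ≤ r) (w : ℤ → (ℤ → ℤ))
    (hw : ∀ s, 1 ≤ s → s ≤ r →
      (∃ A ⊆ Finset.Icc (-1 : ℤ) (s - 2),
        w s = fun i => -(stdE s i) + stdE (s - 1) i + ∑ j ∈ A, stdE j i) ∧
      w s (-1) = w s 0) :
    ∃ σ' : ℤ → ℤ, (∀ i, 1 ≤ i → i ≤ r → 1 ≤ σ' i) ∧ ChangeMaker r σ' ∧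
      (∀ x : ℤ → ℤ,
        (∃ c : ℤ → ℤ, x = fun i => ∑ s ∈ Finset.Icc (1 : ℤ) r, c s * w s i) ↔
          memCM r σ' x) ∧
      IndecompCM r {x | memCM r σ' x} := by
  -- Structure facts about the vectors `w s`.
  have hwf : ∀ s, 1 ≤ s → s ≤ r →
      w s s = -1 ∧ w s (s-1) = 1 ∧
      (∀ i, -1 ≤ i → i ≤ s-2 → w s i = 0 ∨ w s i = 1) ∧
      (∀ i, i < -1 ∨ s < i → w s i = 0) ∧ w s (-1) = w s 0 := by
    intro s h1 h2
    obtain ⟨⟨A, hA, hform⟩, heq⟩ := hw s h1 h2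
    have hAmem : ∀ i, i ∈ A → -1 ≤ i ∧ i ≤ s-2 := fun i hi => Finset.mem_Icc.mp (hA hi)
    have hval : ∀ i, w s i = -(if i = s then 1 else 0) + (if i = s-1 then 1 else 0)
        + (if i ∈ A then 1 else 0) := by
      intro i
      rw [hform]
      simp only [stdE]
      congr 1
      exact Finset.sum_ite_eq A i (fun _ => 1)
    refine ⟨?_, ?_, ?_, ?_, heq⟩
    · rw [hval s, if_pos rfl, if_neg (by omega),
        if_neg (fun h => by have := hAmem s h; omega)]
      ring
    · rw [hval (s-1), if_neg (by omega), if_pos rfl,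
        if_neg (fun h => by have := hAmem (s-1) h; omega)]
      ring
    · intro i hi1 hi2
      rw [hval i, if_neg (by omega), if_neg (by omega)]
      by_cases h : i ∈ A
      · right; rw [if_pos h]; ring
      · left; rw [if_neg h]; ring
    · intro i hi
      rw [hval i, if_neg (by omega), if_neg (by omega),
        if_neg (fun h => by have := hAmem i h; omega)]
      ring
  have hW : ∀ n : ℕ, ((n:ℤ)+1) ≤ r → w ((n:ℤ)+1) (n:ℤ) = 1 ∧
      ∀ i : ℕ, i < n → (w ((n:ℤ)+1) (i:ℤ) = 0 ∨ w ((n:ℤ)+1) (i:ℤ) = 1) := by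
    intro n hn
    obtain ⟨_, hs1, hmid, _, _⟩ := hwf ((n:ℤ)+1) (by omega) hn
    constructor
    · have h' : ((n:ℤ)+1) - 1 = (n:ℤ) := by ring
      rw [h'] at hs1
      exact hs1
    · intro i hi
      exact hmid (i:ℤ) (by omega) (by omega)
  set σ' : ℤ → ℤ := fun i => cmSig w i.toNat with hσdef
  have hσ0 : σ' 0 = 1 := by
    simp only [hσdef]
    exact cmSig_zero w
  have hσpos : ∀ i, 0 ≤ i → i ≤ r → 1 ≤ σ' i := by
    intro i h1 h2
    simp only [hσdef]
    exact cmSig_pos r w hW i.toNat (by omega)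
  -- the recursion satisfied by σ'
  have hsig : ∀ s, 1 ≤ s → s ≤ r →
      σ' s = w s 0 + ∑ i ∈ Finset.Icc (1:ℤ) (s-1), w s i * σ' i := by
    intro s h1 h2
    obtain ⟨n, hn⟩ : ∃ n : ℕ, s = (n:ℤ)+1 := ⟨(s-1).toNat, by omega⟩
    have htn : s.toNat = n + 1 := by omega
    have e1 : σ' s = ∑ i ∈ Finset.range (n+1), w s (i:ℤ) * cmSig w i := by
      simp only [hσdef, htn]
      rw [cmSig_succ, ← hn]
    have e2 : ∑ i ∈ Finset.range (n+1), w s (i:ℤ) * cmSig w i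
        = ∑ i ∈ Finset.Icc (0:ℤ) (s-1), w s i * σ' i := by
      rw [show s - 1 = ((n+1:ℕ):ℤ) - 1 from by omega,
        sum_Icc_range (n+1) (fun i => w s i * σ' i)]
      apply Finset.sum_congr rfl
      intro i _
      simp only [hσdef, Int.toNat_natCast]
    have e3 : ∑ i ∈ Finset.Icc (0:ℤ) (s-1), w s i * σ' i
        = w s 0 * σ' 0 + ∑ i ∈ Finset.Icc (1:ℤ) (s-1), w s i * σ' i := by
      rw [show Finset.Icc (0:ℤ) (s-1) = insert 0 (Finset.Icc 1 (s-1)) from by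
        ext x; simp only [Finset.mem_Icc, Finset.mem_insert]; omega,
        Finset.sum_insert (by simp)]
    rw [e1, e2, e3, hσ0, mul_one]
  have hσ1 : σ' 1 = 1 := by
    have h10 : w 1 0 = 1 := by
      have := (hwf 1 le_rfl hr).2.1
      norm_num at this
      exact this
    rw [hsig 1 le_rfl hr]
    rw [show (1:ℤ)-1 = 0 from rfl, show Finset.Icc (1:ℤ) 0 = ∅ from by simp]
    rw [h10]
    simp
  have hmono : ∀ i, 1 < i → i ≤ r → σ' (i-1) ≤ σ' i := by
    intro i h1 h2
    obtain ⟨n, hn⟩ : ∃ n : ℕ, i = (n:ℤ)+1 := ⟨(i-1).toNat, by omega⟩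
    have e1 : (i-1).toNat = n := by omega
    have e2 : i.toNat = n+1 := by omega
    simp only [hσdef, e1, e2]
    exact cmSig_mono r w hW n (by omega)
  have hub : ∀ i, 1 ≤ i → i ≤ r → σ' i ≤ (∑ j ∈ Finset.Icc 1 (i-1), σ' j) + 1 := by
    intro i h1 h2
    rcases eq_or_lt_of_le h1 with h | h
    · rw [← h]
      rw [show (1:ℤ)-1 = 0 from rfl, show Finset.Icc (1:ℤ) 0 = ∅ from by simp]
      simp [hσ1]
    · obtain ⟨n, hn⟩ : ∃ n : ℕ, i = (n:ℤ)+1 := ⟨(i-1).toNat, by omega⟩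
      have e2 : i.toNat = n+1 := by omega
      have hup := cmSig_upper r w hW n (by omega)
      have e3 : ∑ j ∈ Finset.range (n+1), cmSig w j = ∑ j ∈ Finset.Icc (0:ℤ) (i-1), σ' j := by
        rw [show i - 1 = ((n+1:ℕ):ℤ) - 1 from by omega, sum_Icc_range (n+1) σ']
        apply Finset.sum_congr rfl
        intro j _
        simp only [hσdef, Int.toNat_natCast]
      have e4 : ∑ j ∈ Finset.Icc (0:ℤ) (i-1), σ' j
          = σ' 0 + ∑ j ∈ Finset.Icc (1:ℤ) (i-1), σ' j := by
        rw [show Finset.Icc (0:ℤ) (i-1) = insert 0 (Finset.Icc 1 (i-1)) from by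
          ext x; simp only [Finset.mem_Icc, Finset.mem_insert]; omega,
          Finset.sum_insert (by simp)]
      have e5 : σ' i = cmSig w (n+1) := by simp only [hσdef, e2]
      rw [e3, e4, hσ0] at hup
      rw [e5]
      omega
  -- membership of the generators
  have hwmem : ∀ s, 1 ≤ s → s ≤ r → memCM r σ' (w s) := by
    intro s h1 h2
    obtain ⟨hss, hs1, hmid, hout, heq⟩ := hwf s h1 h2
    refine ⟨fun i hi => hout i (by simp only [Finset.mem_Icc] at hi; omega), ?_, ?_⟩
    · rw [ip_sigma_eq r hr]
      have hsub : Finset.Icc (1:ℤ) s ⊆ Finset.Icc (1:ℤ) r := Finset.Icc_subset_Icc le_rfl h2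
      have hz : ∀ i ∈ Finset.Icc (1:ℤ) r, i ∉ Finset.Icc (1:ℤ) s → w s i * σ' i = 0 := by
        intro i hi1 hi2
        simp only [Finset.mem_Icc] at hi1 hi2
        rw [hout i (by omega)]; ring
      rw [← Finset.sum_subset hsub hz]
      have hsplit : ∑ i ∈ Finset.Icc (1:ℤ) s, w s i * σ' i
          = (∑ i ∈ Finset.Icc (1:ℤ) (s-1), w s i * σ' i) + w s s * σ' s := by
        have h := sum_Icc_top 1 (s-1) (by omega) (fun i => w s i * σ' i)
        rw [show s-1+1 = s from by ring] at h
        exact h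
      rw [hsplit, hss]
      have := hsig s h1 h2
      linarith
    · rw [ip_rho_eq r hr, heq]; ring
  have hspan_mem : ∀ c : ℤ → ℤ,
      memCM r σ' (fun i => ∑ s ∈ Finset.Icc (1:ℤ) r, c s * w s i) := by
    intro c
    refine ⟨?_, ?_, ?_⟩
    · intro i hi
      apply Finset.sum_eq_zero
      intro s hs
      simp only [Finset.mem_Icc] at hs hi
      rw [(hwf s hs.1 hs.2).2.2.2.1 i (by omega)]; ring
    · rw [ip_sum_left]
      apply Finset.sum_eq_zero
      intro s hs
      simp only [Finset.mem_Icc] at hs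
      rw [(hwmem s hs.1 hs.2).2.1]; ring
    · rw [ip_sum_left]
      apply Finset.sum_eq_zero
      intro s hs
      simp only [Finset.mem_Icc] at hs
      rw [(hwmem s hs.1 hs.2).2.2]; ring
  -- choose subset-sum representations
  have hSex : ∀ k : ℤ, ∃ S : Finset ℤ, 1 ≤ k → k ≤ r →
      (S ⊆ Finset.Icc (1:ℤ) (k-1) ∧ ∑ j ∈ S, σ' j = σ' k - 1) := by
    intro k
    by_cases hk : 1 ≤ k ∧ k ≤ r
    · obtain ⟨hk1, hk2⟩ := hk
      have hcast : ((k-1).toNat : ℤ) = k - 1 := by omega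
      obtain ⟨S, hS1, hS2⟩ := cm_subset_sum r σ' hub (k-1).toNat (by omega) (σ' k - 1)
        (by have := hσpos k (by omega) hk2; omega)
        (by rw [hcast]; have := hub k hk1 hk2; omega)
      rw [hcast] at hS1
      exact ⟨S, fun _ _ => ⟨hS1, hS2⟩⟩
    · exact ⟨∅, fun h1 h2 => absurd ⟨h1, h2⟩ hk⟩
  choose S hS using hSex
  set v : ℤ → ℤ → ℤ := fun k i =>
    (if i = -1 then 1 else 0) + (if i = 0 then 1 else 0) +
      (if i ∈ S k then 1 else 0) - (if i = k then 1 else 0) with hvdef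
  have hSmem : ∀ k, 1 ≤ k → k ≤ r → ∀ i ∈ S k, 1 ≤ i ∧ i ≤ k-1 :=
    fun k h1 h2 i hi => Finset.mem_Icc.mp ((hS k h1 h2).1 hi)
  have hvm1 : ∀ k, 1 ≤ k → k ≤ r → v k (-1) = 1 := by
    intro k h1 h2
    have hns : (-1:ℤ) ∉ S k := fun h => by have := hSmem k h1 h2 _ h; omega
    simp only [hvdef]
    rw [if_neg hns, if_neg (show (-1:ℤ) ≠ k by omega)]
    norm_num
  have hv0 : ∀ k, 1 ≤ k → k ≤ r → v k 0 = 1 := by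
    intro k h1 h2
    have hns : (0:ℤ) ∉ S k := fun h => by have := hSmem k h1 h2 _ h; omega
    simp only [hvdef]
    rw [if_neg hns, if_neg (show (0:ℤ) ≠ k by omega)]
    norm_num
  have hvk : ∀ k, 1 ≤ k → k ≤ r → v k k = -1 := by
    intro k h1 h2
    have hns : k ∉ S k := fun h => by have := hSmem k h1 h2 _ h; omega
    simp only [hvdef]
    rw [if_neg hns, if_neg (show k ≠ -1 by omega), if_neg (show k ≠ 0 by omega)]
    simp
  have hvtop : ∀ k, 1 ≤ k → k ≤ r → ∀ i, k < i → v k i = 0 := by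
    intro k h1 h2 i hi
    have hns : i ∉ S k := fun h => by have := hSmem k h1 h2 _ h; omega
    simp only [hvdef]
    rw [if_neg hns, if_neg (show i ≠ -1 by omega), if_neg (show i ≠ 0 by omega),
      if_neg (show i ≠ k by omega)]
    norm_num
  have hvbot : ∀ k, 1 ≤ k → k ≤ r → ∀ i, i < -1 → v k i = 0 := by
    intro k h1 h2 i hi
    have hns : i ∉ S k := fun h => by have := hSmem k h1 h2 _ h; omega
    simp only [hvdef]
    rw [if_neg hns, if_neg (show i ≠ -1 by omega), if_neg (show i ≠ 0 by omega),
      if_neg (show i ≠ k by omega)]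
    norm_num
  have hvmid : ∀ k, 1 ≤ k → k ≤ r → ∀ i, 1 ≤ i → i ≠ k →
      v k i = (if i ∈ S k then 1 else 0) := by
    intro k h1 h2 i hi hik
    simp only [hvdef]
    rw [if_neg (show i ≠ -1 by omega), if_neg (show i ≠ 0 by omega), if_neg hik]
    ring
  have hvmem : ∀ k, 1 ≤ k → k ≤ r → memCM r σ' (v k) := by
    intro k h1 h2
    refine ⟨?_, ?_, ?_⟩
    · intro i hi
      simp only [Finset.mem_Icc] at hi
      rcases (by omega : i < -1 ∨ r < i) with h | h
      · exact hvbot k h1 h2 i h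
      · exact hvtop k h1 h2 i (by omega)
    · rw [ip_sigma_eq r hr]
      have hcongr : ∀ i ∈ Finset.Icc (1:ℤ) r, v k i * σ' i
          = (if i ∈ S k then σ' i else 0) - (if i = k then σ' i else 0) := by
        intro i hi
        simp only [Finset.mem_Icc] at hi
        simp only [hvdef]
        rw [if_neg (show i ≠ -1 by omega), if_neg (show i ≠ 0 by omega)]
        split_ifs <;> ring
      rw [Finset.sum_congr rfl hcongr, Finset.sum_sub_distrib,
        Finset.sum_ite_eq' (Finset.Icc (1:ℤ) r) k σ',
        if_pos (Finset.mem_Icc.mpr ⟨h1, h2⟩)]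
      have hsub' : S k ⊆ Finset.Icc (1:ℤ) r :=
        (hS k h1 h2).1.trans (Finset.Icc_subset_Icc le_rfl (by omega))
      rw [Finset.sum_ite_mem (Finset.Icc (1:ℤ) r) (S k) σ',
        Finset.inter_eq_right.mpr hsub', (hS k h1 h2).2, hv0 k h1 h2]
      ring
    · rw [ip_rho_eq r hr, hvm1 k h1 h2, hv0 k h1 h2]
      ring
  have hvtri : ∀ s, 1 ≤ s → s ≤ r →
      memCM r σ' (v s) ∧ v s s = -1 ∧ ∀ i, s < i → v s i = 0 :=
    fun s h1 h2 => ⟨hvmem s h1 h2, hvk s h1 h2, fun i hi => hvtop s h1 h2 i hi⟩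
  have hS1empty : S 1 = ∅ := by
    have h := (hS 1 le_rfl hr).1
    rw [show (1:ℤ)-1 = 0 from rfl, show Finset.Icc (1:ℤ) 0 = ∅ from by simp] at h
    exact Finset.subset_empty.mp h
  have hipv1 : ∀ x : ℤ → ℤ, ip r x (v 1) = x (-1) + x 0 - x 1 := by
    intro x
    rw [ip_expand r hr]
    have hcongr : ∀ i ∈ Finset.Icc (1:ℤ) r, x i * v 1 i
        = (if i = 1 then -x i else 0) := by
      intro i hi
      simp only [Finset.mem_Icc] at hi
      simp only [hvdef, hS1empty]
      rw [if_neg (show i ≠ -1 by omega), if_neg (show i ≠ 0 by omega)]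
      simp only [Finset.notMem_empty, if_false]
      split_ifs <;> ring
    rw [Finset.sum_congr rfl hcongr,
      Finset.sum_ite_eq' (Finset.Icc (1:ℤ) r) 1 (fun i => -x i),
      if_pos (Finset.mem_Icc.mpr ⟨le_rfl, hr⟩),
      hvm1 1 le_rfl hr, hv0 1 le_rfl hr]
    ring
  have hvv1 : ∀ k, 1 ≤ k → k ≤ r → 1 ≤ ip r (v k) (v 1) := by
    intro k h1 h2
    rw [hipv1, hvm1 k h1 h2, hv0 k h1 h2]
    by_cases hk1 : k = 1
    · subst hk1
      rw [hvk 1 le_rfl hr]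
      norm_num
    · rw [hvmid k h1 h2 1 le_rfl (fun h => hk1 h.symm)]
      split_ifs <;> norm_num
  have hvrange : ∀ k, 1 ≤ k → k ≤ r → ∀ i, -1 ≤ v k i ∧ v k i ≤ 1 := by
    intro k h1 h2 i
    simp only [hvdef]
    by_cases hiS : i ∈ S k
    · have := hSmem k h1 h2 i hiS
      rw [if_pos hiS, if_neg (show i ≠ -1 by omega), if_neg (show i ≠ 0 by omega)]
      split_ifs <;> omega
    · rw [if_neg hiS]
      split_ifs <;> omega
  have hcore : ∀ k, 1 ≤ k → k ≤ r → ∀ x y : ℤ → ℤ, memCM r σ' x → memCM r σ' y →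
      (∀ i, v k i = x i + y i) → (∀ i ∈ Finset.Icc (-1:ℤ) r, x i * y i = 0) →
      x k = 0 → x = 0 := by
    intro k hk1 hk2 x y hx hy hsum hprod hxk
    have hxval : ∀ i ∈ Finset.Icc (-1:ℤ) r, x i = 0 ∨ x i = v k i := by
      intro i hi
      rcases mul_eq_zero.mp (hprod i hi) with h | h
      · left; exact h
      · right; have := hsum i; omega
    have hnn : ∀ i ∈ Finset.Icc (1:ℤ) r, 0 ≤ x i * σ' i := by
      intro i hi
      simp only [Finset.mem_Icc] at hi
      have hσ := hσpos i (by omega) hi.2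
      rcases hxval i (by simp only [Finset.mem_Icc]; omega) with h | h
      · rw [h]; simp
      · by_cases hik : i = k
        · subst hik; rw [hxk]; simp
        · rw [h, hvmid k hk1 hk2 i hi.1 hik]
          split_ifs <;> nlinarith
    have hx0nn : 0 ≤ x 0 := by
      rcases hxval 0 (by simp only [Finset.mem_Icc]; omega) with h | h
      · omega
      · rw [h, hv0 k hk1 hk2]; norm_num
    have hsig0 := hx.2.1
    rw [ip_sigma_eq r hr] at hsig0
    have hsnn : 0 ≤ ∑ i ∈ Finset.Icc (1:ℤ) r, x i * σ' i := Finset.sum_nonneg hnn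
    have hx0 : x 0 = 0 := by omega
    have hsz : ∑ i ∈ Finset.Icc (1:ℤ) r, x i * σ' i = 0 := by omega
    have hterm0 : ∀ i ∈ Finset.Icc (1:ℤ) r, x i * σ' i = 0 :=
      (Finset.sum_eq_zero_iff_of_nonneg hnn).mp hsz
    have hxm1 : x (-1) = 0 := by
      have := hx.2.2
      rw [ip_rho_eq r hr] at this
      omega
    funext i
    simp only [Pi.zero_apply]
    by_cases hicc : i ∈ Finset.Icc (-1:ℤ) r
    · have hicc' := Finset.mem_Icc.mp hicc
      rcases lt_trichotomy i 0 with h | h | h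
      · have : i = -1 := by omega
        rw [this]; exact hxm1
      · rw [h]; exact hx0
      · have hi' : i ∈ Finset.Icc (1:ℤ) r := by simp only [Finset.mem_Icc]; omega
        have hσ := hσpos i (by omega) (by omega)
        rcases mul_eq_zero.mp (hterm0 i hi') with h' | h'
        · exact h'
        · omega
    · exact hx.1 i hicc
  have hirr : ∀ k, 1 ≤ k → k ≤ r → ∀ x y : ℤ → ℤ, memCM r σ' x → memCM r σ' y →
      (∀ i, v k i = x i + y i) → 0 ≤ ip r x y → x = 0 ∨ y = 0 := by
    intro k hk1 hk2 x y hx hy hsum hipnn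
    have hterm : ∀ i ∈ Finset.Icc (-1:ℤ) r, x i * y i ≤ 0 := by
      intro i _
      have h1 := hvrange k hk1 hk2 i
      have h2 := hsum i
      by_contra hc
      push_neg at hc
      rcases mul_pos_iff.mp hc with ⟨ha, hb⟩ | ⟨ha, hb⟩ <;> omega
    have hle : ip r x y ≤ 0 := Finset.sum_nonpos hterm
    have hip0 : ip r x y = 0 := le_antisymm hle hipnn
    have hprod : ∀ i ∈ Finset.Icc (-1:ℤ) r, x i * y i = 0 :=
      (Finset.sum_eq_zero_iff_of_nonpos hterm).mp hip0
    have hk' : x k * y k = 0 := hprod k (by simp only [Finset.mem_Icc]; omega)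
    rcases mul_eq_zero.mp hk' with h | h
    · left; exact hcore k hk1 hk2 x y hx hy hsum hprod h
    · right
      exact hcore k hk1 hk2 y x hy hx (fun i => by rw [hsum i]; ring)
        (fun i hi => by rw [mul_comm]; exact hprod i hi) h
  refine ⟨σ', fun i h1 h2 => hσpos i (by omega) h2,
    ⟨by rw [hσ1]; norm_num, le_of_eq hσ1,
      fun i h1 h2 => ⟨hmono i h1 h2, hub i (by omega) h2⟩⟩, ?_, ?_⟩
  · -- span characterisation
    intro x
    constructor
    · rintro ⟨c, rfl⟩
      exact hspan_mem c
    · intro hx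
      exact span_of_triangular r hr σ' w
        (fun s h1 h2 => ⟨hwmem s h1 h2, (hwf s h1 h2).1,
          fun i hi => (hwf s h1 h2).2.2.2.1 i (Or.inr hi)⟩) x hx
  · -- indecomposability
    rintro ⟨L1, L2, h1S, h2S, h1ne, h2ne, hmeet, hdec, horth⟩
    have hvL : ∀ k, 1 ≤ k → k ≤ r → (v k ∈ L1 ∨ v k ∈ L2) := by
      intro k hk1 hk2
      obtain ⟨a, haL, b, hbL, hab⟩ := hdec (v k) (hvmem k hk1 hk2)
      have hsum : ∀ i, v k i = a i + b i := fun i => by rw [hab]; rfl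
      have horth0 : 0 ≤ ip r a b := le_of_eq (horth a haL b hbL).symm
      rcases hirr k hk1 hk2 a b (h1S haL) (h2S hbL) hsum horth0 with h | h
      · right
        have hvb : v k = b := by rw [hab, h, zero_add]
        rw [hvb]; exact hbL
      · left
        have hva : v k = a := by rw [hab, h, add_zero]
        rw [hva]; exact haL
    have key : ∀ (M N : AddSubgroup (ℤ → ℤ)), (N : Set (ℤ → ℤ)) ⊆ {x | memCM r σ' x} →
        (∀ k, 1 ≤ k → k ≤ r → v k ∈ M) → (∀ x ∈ M, ∀ y ∈ N, ip r x y = 0) → N = ⊥ := by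
      intro M N hNS hvM horth'
      rw [AddSubgroup.eq_bot_iff_forall]
      intro y hy
      have hymem : memCM r σ' y := hNS hy
      obtain ⟨c, hc⟩ := span_of_triangular r hr σ' v hvtri y hymem
      have hyy : ip r y y = 0 := by
        have h2 : ip r (fun i => ∑ s ∈ Finset.Icc (1:ℤ) r, c s * v s i) y
            = ∑ s ∈ Finset.Icc (1:ℤ) r, c s * ip r (v s) y := ip_sum_left r c v y
        rw [← hc] at h2
        rw [h2]
        apply Finset.sum_eq_zero
        intro s hs
        simp only [Finset.mem_Icc] at hs
        rw [horth' (v s) (hvM s hs.1 hs.2) y hy]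
        ring
      have hnn : ∀ i ∈ Finset.Icc (-1:ℤ) r, 0 ≤ y i * y i := fun i _ => mul_self_nonneg _
      have hz : ∀ i ∈ Finset.Icc (-1:ℤ) r, y i * y i = 0 :=
        (Finset.sum_eq_zero_iff_of_nonneg hnn).mp hyy
      funext i
      simp only [Pi.zero_apply]
      by_cases hicc : i ∈ Finset.Icc (-1:ℤ) r
      · exact mul_self_eq_zero.mp (hz i hicc)
      · exact hymem.1 i hicc
    rcases hvL 1 le_rfl hr with h | h
    · apply h2ne
      apply key L1 L2 h2S ?_ horth
      intro k hk1 hk2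
      rcases hvL k hk1 hk2 with h' | h'
      · exact h'
      · exfalso
        have h0 : ip r (v 1) (v k) = 0 := horth (v 1) h (v k) h'
        have h1 : ip r (v k) (v 1) = ip r (v 1) (v k) := ip_comm r _ _
        have := hvv1 k hk1 hk2
        omega
    · apply h1ne
      apply key L2 L1 h1S ?_ (fun x hx y hy => by rw [ip_comm]; exact horth y hy x hx)
      intro k hk1 hk2
      rcases hvL k hk1 hk2 with h' | h'
      · exfalso
        have h0 : ip r (v k) (v 1) = 0 := horth (v k) h' (v 1) h
        have := hvv1 k hk1 hk2
        omega
      · exact h'
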